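/- Let d ∈ ℕ with d ≥ 1, let Δ > 0 and ε > 0, and let ν = Lap(Δ/ε) be the Laplace measure with scale Δ/ε. For a ∈ ℝ^d let μ_a denote the pushforward of the d-fold product measure ν^{⊗d} under the translation x ↦ x + a. Then for all a, a' ∈ ℝ^d with ‖a − a'‖₁ ≤ Δ and every measurable set S ⊆ ℝ^d, μ_a(S) ≤ exp(ε) · μ_{a'}(S). (Privacy of the Laplace mechanism with ℓ1-sensitivity Δ.) -/

import Mathlib

open MeasureTheory
open scoped ENNReal

noncomputable def lapMeasure (b : ℝ) : Measure ℝ :=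
  volume.withDensity fun x => ENNReal.ofReal (1 / (2 * b) * Real.exp (-|x| / b))

/-- Fubini for lower integrals of products of coordinate functions. -/
lemma lintegral_pi_prod : ∀ (n : ℕ) (f : Fin n → ℝ → ℝ≥0∞), (∀ i, Measurable (f i)) →
    ∫⁻ x : Fin n → ℝ, ∏ i, f i (x i) ∂(Measure.pi fun _ => (volume : Measure ℝ)) =
      ∏ i, ∫⁻ x, f i x := by
  intro n
  induction n with
  | zero => intro f hf; simp [Measure.pi_univ]
  | succ n ih =>
      intro f hf
      have h := (measurePreserving_piFinSuccAbove (fun _ : Fin (n + 1) => (volume : Measure ℝ)) 0).symm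
      have hF : Measurable fun x : Fin (n + 1) → ℝ => ∏ i, f i (x i) :=
        Finset.measurable_prod _ fun i _ => (hf i).comp (measurable_pi_apply i)
      rw [← h.lintegral_comp hF]
      simp_rw [MeasurableEquiv.piFinSuccAbove_symm_apply, Fin.insertNthEquiv,
        Fin.prod_univ_succ, Fin.insertNth_zero, Equiv.coe_fn_mk, Fin.cons_zero, Fin.cons_succ]
      simp only [Fin.zero_succAbove, cast_eq]
      have hg : Measurable fun y : Fin n → ℝ => ∏ i : Fin n, f i.succ (y i) :=
        Finset.measurable_prod _ fun i _ => (hf i.succ).comp (measurable_pi_apply i)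
      rw [lintegral_prod_mul (f := f 0) (g := fun y : Fin n → ℝ => ∏ i : Fin n, f i.succ (y i))
        (hf 0).aemeasurable hg.aemeasurable]
      rw [ih (fun i => f i.succ) (fun i => hf i.succ)]

lemma pi_withDensity' {n : ℕ} (f : Fin n → ℝ → ℝ≥0∞) (hf : ∀ i, Measurable (f i))
    [∀ i : Fin n, SigmaFinite ((volume : Measure ℝ).withDensity (f i))] :
    (Measure.pi fun i => (volume : Measure ℝ).withDensity (f i)) =
      ((Measure.pi fun _ : Fin n => (volume : Measure ℝ)).withDensity
        fun x => ∏ i, f i (x i)) := by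
  refine Measure.pi_eq fun s hs => ?_
  rw [withDensity_apply _ (MeasurableSet.univ_pi hs),
    ← lintegral_indicator (MeasurableSet.univ_pi hs)]
  have hind : (Set.indicator (Set.univ.pi s) fun x : Fin n → ℝ => ∏ i, f i (x i)) =
      fun x => ∏ i, Set.indicator (s i) (f i) (x i) := by
    funext x
    by_cases hx : x ∈ Set.univ.pi s
    · rw [Set.indicator_of_mem hx]
      exact Finset.prod_congr rfl fun i _ =>
        (Set.indicator_of_mem (hx i (Set.mem_univ i)) _).symm
    · rw [Set.indicator_of_notMem hx]
      rw [Set.mem_pi] at hx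
      push_neg at hx
      obtain ⟨i, _, hi⟩ := hx
      exact (Finset.prod_eq_zero (Finset.mem_univ i)
        (Set.indicator_of_notMem hi _)).symm
  rw [hind, lintegral_pi_prod n _ (fun i => (hf i).indicator (hs i))]
  exact Finset.prod_congr rfl fun i _ => by
    rw [lintegral_indicator (hs i), withDensity_apply _ (hs i)]

lemma map_add_withDensity (g : ℝ → ℝ≥0∞) (hg : Measurable g) (c : ℝ) :
    Measure.map (· + c) (volume.withDensity g) =
      volume.withDensity fun x => g (x - c) := by
  ext s hs
  rw [Measure.map_apply (measurable_add_const c) hs,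
    withDensity_apply _ (hs.preimage (measurable_add_const c)), withDensity_apply _ hs]
  have hmp : MeasurePreserving (· + c) (volume : Measure ℝ) volume :=
    measurePreserving_add_right volume c
  have := hmp.setLIntegral_comp_preimage hs (f := fun x => g (x - c))
    (hg.comp (measurable_sub_const c))
  simpa using this

noncomputable def lapShift (b c : ℝ) : ℝ → ℝ≥0∞ :=
  fun x => ENNReal.ofReal (1 / (2 * b) * Real.exp (-|x - c| / b))

instance lapShift_sigmaFinite (b c : ℝ) :
    SigmaFinite ((volume : Measure ℝ).withDensity (lapShift b c)) := by
  unfold lapShift; infer_instance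

lemma lapShift_measurable (b c : ℝ) : Measurable (lapShift b c) := by
  apply ENNReal.measurable_ofReal.comp
  fun_prop

lemma map_lapMeasure (b c : ℝ) :
    Measure.map (· + c) (lapMeasure b) = volume.withDensity (lapShift b c) := by
  rw [lapMeasure, map_add_withDensity _ (by apply ENNReal.measurable_ofReal.comp; fun_prop) c]
  rfl

theorem laplace_mechanism_privacy (d : ℕ) (hd : 1 ≤ d) (Δ ε : ℝ) (hΔ : 0 < Δ) (hε : 0 < ε)
    (a a' : Fin d → ℝ) (hsens : ∑ i, |a i - a' i| ≤ Δ)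
    (S : Set (Fin d → ℝ)) (hS : MeasurableSet S) :
    Measure.map (fun x => x + a) (Measure.pi fun _ : Fin d => lapMeasure (Δ / ε)) S ≤
      ENNReal.ofReal (Real.exp ε) *
        Measure.map (fun x => x + a') (Measure.pi fun _ : Fin d => lapMeasure (Δ / ε)) S := by
  set b := Δ / ε with hbdef
  have hb : 0 < b := div_pos hΔ hε
  have hΔb : Δ / b = ε := by rw [hbdef]; field_simp
  have key : ∀ v : Fin d → ℝ,
      Measure.map (fun x => x + v) (Measure.pi fun _ : Fin d => lapMeasure b) =
        (Measure.pi fun _ : Fin d => (volume : Measure ℝ)).withDensity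
          fun x => ∏ i, lapShift b (v i) (x i) := by
    intro v
    have h1 : ∀ i : Fin d, MeasurePreserving (· + v i) (lapMeasure b)
        ((volume : Measure ℝ).withDensity (lapShift b (v i))) :=
      fun i => ⟨measurable_add_const _, map_lapMeasure b (v i)⟩
    have h2 := (measurePreserving_pi (fun _ : Fin d => lapMeasure b)
      (fun i => (volume : Measure ℝ).withDensity (lapShift b (v i))) h1).map_eq
    have h3 : (fun x : Fin d → ℝ => x + v) = fun x i => x i + v i := rfl
    rw [h3, h2, pi_withDensity' _ (fun i => lapShift_measurable b (v i))]
  rw [key a, key a', withDensity_apply _ hS, withDensity_apply _ hS]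
  have hpt : ∀ x : Fin d → ℝ, (∏ i, lapShift b (a i) (x i)) ≤
      ENNReal.ofReal (Real.exp ε) * ∏ i, lapShift b (a' i) (x i) := by
    intro x
    have hk : (0 : ℝ) ≤ 1 / (2 * b) := by positivity
    unfold lapShift
    rw [← ENNReal.ofReal_prod_of_nonneg, ← ENNReal.ofReal_prod_of_nonneg,
      ← ENNReal.ofReal_mul (Real.exp_nonneg ε)]
    · apply ENNReal.ofReal_le_ofReal
      simp_rw [Finset.prod_mul_distrib, Finset.prod_const, ← Real.exp_sum]
      rw [mul_left_comm]
      apply mul_le_mul_of_nonneg_left _ (by positivity)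
      rw [← Real.exp_add]
      apply Real.exp_le_exp.mpr
      have step1 : ∑ i, -|x i - a i| / b ≤
          ∑ i, (-|x i - a' i| / b + |a i - a' i| / b) := by
        apply Finset.sum_le_sum
        intro i _
        rw [← add_div]
        have htri : |x i - a' i| ≤ |x i - a i| + |a i - a' i| := by
          calc |x i - a' i| = |(x i - a i) + (a i - a' i)| := by ring_nf
            _ ≤ |x i - a i| + |a i - a' i| := abs_add_le _ _
        gcongr
        linarith
      calc ∑ i, -|x i - a i| / b
          ≤ ∑ i, (-|x i - a' i| / b + |a i - a' i| / b) := step1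
        _ = (∑ i, -|x i - a' i| / b) + (∑ i, |a i - a' i|) / b := by
            rw [Finset.sum_add_distrib, Finset.sum_div]
        _ ≤ (∑ i, -|x i - a' i| / b) + Δ / b := by
            gcongr
        _ = ε + ∑ i, -|x i - a' i| / b := by rw [hΔb]; ring
    · intro i _; positivity
    · intro i _; positivity
  calc ∫⁻ x in S, ∏ i, lapShift b (a i) (x i) ∂(Measure.pi fun _ : Fin d => (volume : Measure ℝ))
      ≤ ∫⁻ x in S, ENNReal.ofReal (Real.exp ε) * ∏ i, lapShift b (a' i) (x i)
          ∂(Measure.pi fun _ : Fin d => (volume : Measure ℝ)) := lintegral_mono fun x => hpt x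
    _ = ENNReal.ofReal (Real.exp ε) * ∫⁻ x in S, ∏ i, lapShift b (a' i) (x i)
          ∂(Measure.pi fun _ : Fin d => (volume : Measure ℝ)) :=
        lintegral_const_mul' _ _ ENNReal.ofReal_ne_top
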